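/- Finiteness of the stretched-exponential moment series: let γ ∈ (−2,0), 0 < s < γ+2, κ > 0, and define for l > 4 α(l) = l^{2−4/(γ+2)}/(l−4) · ((l−4)/(l+γ−2))^{(l−4)/(γ+2)} · l^{l/(γ+2)}. Then the series Σ_{j≥j₀} (κ^j / j!) α(sj) converges, where j₀ is the smallest integer with s(j₀+1) > 4. -/

import Mathlib

open Real Filter

/-- `j^j ≤ j! * e^j`. -/
lemma pow_self_le_factorial_mul_exp (j : ℕ) :
    (j : ℝ) ^ j ≤ (j.factorial : ℝ) * Real.exp j := by
  have hfac : (0 : ℝ) < j.factorial := by exact_mod_cast j.factorial_pos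
  have hterm : (j : ℝ) ^ j / j.factorial
      ≤ ∑ i ∈ Finset.range (j + 1), (j : ℝ) ^ i / i.factorial :=
    Finset.single_le_sum (f := fun i => (j : ℝ) ^ i / i.factorial)
      (fun i _ => by positivity) (Finset.self_mem_range_succ j)
  have hsum := Real.sum_le_exp_of_nonneg (x := (j : ℝ)) j.cast_nonneg (j + 1)
  have h := hterm.trans hsum
  rw [div_le_iff₀ hfac] at h
  linarith
lemma sq_le_two_pow {j : ℕ} (hj : 4 ≤ j) : j ^ 2 ≤ 2 ^ j := by
  induction j, hj using Nat.le_induction with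
  | base => norm_num
  | succ n hn ih =>
    calc (n + 1) ^ 2 ≤ 2 * n ^ 2 := by nlinarith
      _ ≤ 2 * 2 ^ n := Nat.mul_le_mul_left 2 ih
      _ = 2 ^ (n + 1) := by ring

lemma aux_summable {D θ : ℝ} (hD : 0 < D) (hθ : θ < 1) :
    Summable (fun j : ℕ => D ^ j * (j.factorial : ℝ) ^ (θ - 1)) := by
  refine summable_of_ratio_norm_eventually_le (r := 1/2) (by norm_num) ?_
  have hinf : Tendsto (fun j : ℕ => ((j : ℝ) + 1) ^ (1 - θ)) atTop atTop :=
    (tendsto_rpow_atTop (by linarith)).comp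
      (tendsto_atTop_add_const_right _ 1 tendsto_natCast_atTop_atTop)
  filter_upwards [hinf.eventually_ge_atTop (2 * D)] with j hj
  have hfac : (0 : ℝ) < j.factorial := by exact_mod_cast j.factorial_pos
  have hj1 : (0 : ℝ) < (j : ℝ) + 1 := by positivity
  have hx : (0 : ℝ) < ((j : ℝ) + 1) ^ (1 - θ) := Real.rpow_pos_of_pos hj1 _
  have hfs : (((j + 1).factorial : ℕ) : ℝ) = ((j : ℝ) + 1) * j.factorial := by
    push_cast [Nat.factorial_succ]; ring
  have h1 : (((j + 1).factorial : ℕ) : ℝ) ^ (θ - 1)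
      = ((j : ℝ) + 1) ^ (θ - 1) * (j.factorial : ℝ) ^ (θ - 1) := by
    rw [hfs, Real.mul_rpow hj1.le hfac.le]
  have hneg : ((j : ℝ) + 1) ^ (θ - 1) = (((j : ℝ) + 1) ^ (1 - θ))⁻¹ := by
    rw [show θ - 1 = -(1 - θ) by ring, Real.rpow_neg hj1.le]
  have hsmall : D * ((j : ℝ) + 1) ^ (θ - 1) ≤ 1 / 2 := by
    rw [hneg, ← div_eq_mul_inv, div_le_iff₀ hx]; linarith
  have hp1 : 0 < D ^ (j + 1) * (((j + 1).factorial : ℕ) : ℝ) ^ (θ - 1) := by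
    have : (0 : ℝ) < (j + 1).factorial := by exact_mod_cast (j + 1).factorial_pos
    exact mul_pos (pow_pos hD _) (Real.rpow_pos_of_pos this _)
  have hp2 : 0 < D ^ j * (j.factorial : ℝ) ^ (θ - 1) :=
    mul_pos (pow_pos hD _) (Real.rpow_pos_of_pos hfac _)
  rw [Real.norm_eq_abs, Real.norm_eq_abs, abs_of_pos hp1, abs_of_pos hp2]
  calc D ^ (j + 1) * (((j + 1).factorial : ℕ) : ℝ) ^ (θ - 1)
      = (D * ((j : ℝ) + 1) ^ (θ - 1)) * (D ^ j * (j.factorial : ℝ) ^ (θ - 1)) := by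
        rw [h1]; ring
    _ ≤ 1 / 2 * (D ^ j * (j.factorial : ℝ) ^ (θ - 1)) :=
        mul_le_mul_of_nonneg_right hsmall hp2.le

/-- The moment-growth constant `α(l)` (for `l > 4`) from the linear-in-time propagation of
`L¹` moments for the Landau equation with soft potentials. -/
noncomputable def momentConst (γ l : ℝ) : ℝ :=
  l ^ (2 - 4 / (γ + 2)) / (l - 4) * ((l - 4) / (l + γ - 2)) ^ ((l - 4) / (γ + 2))
    * l ^ (l / (γ + 2))

set_option maxHeartbeats 1000000 in
/-- Finiteness of the stretched-exponential moment series: for `γ ∈ (-2,0)`, `0 < s < γ+2`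
and `κ > 0`, the series `Σ_{j : s j > 4} κ^j/j! · α(s j)` converges. -/
theorem stretched_exponential_series_summable (γ s κ : ℝ) (hγ : γ ∈ Set.Ioo (-2 : ℝ) 0)
    (hs0 : 0 < s) (hs : s < γ + 2) (hκ : 0 < κ) :
    Summable (fun j : ℕ =>
      if 4 < s * j then κ ^ j / (Nat.factorial j : ℝ) * momentConst γ (s * j) else 0) := by
  obtain ⟨hγ1, hγ0⟩ := hγ
  have hγ2 : (0 : ℝ) < γ + 2 := by linarith
  set θ : ℝ := s / (γ + 2) with hθdef
  have hθ0 : 0 < θ := div_pos hs0 hγ2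
  have hθ1 : θ < 1 := (div_lt_one hγ2).mpr hs
  set D : ℝ := κ * (2 * s ^ θ * Real.exp θ) with hDdef
  have hD : 0 < D := by
    have h1 : 0 < s ^ θ := Real.rpow_pos_of_pos hs0 _
    have h2 := Real.exp_pos θ
    positivity
  -- the key pointwise bound for large j
  have key : ∀ j : ℕ, 5 ≤ s * j → 4 ≤ j →
      κ ^ j / (j.factorial : ℝ) * momentConst γ (s * j)
        ≤ s ^ 2 * (D ^ j * (j.factorial : ℝ) ^ (θ - 1)) := by
    intro j h5 hj4
    have hjR : (4 : ℝ) ≤ (j : ℝ) := by exact_mod_cast hj4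
    have hfac : (0 : ℝ) < j.factorial := by exact_mod_cast j.factorial_pos
    have hl0 : 0 < s * (j : ℝ) := by linarith
    have hl1 : 1 ≤ s * (j : ℝ) := by linarith
    have hl4 : 1 ≤ s * (j : ℝ) - 4 := by linarith
    have hden : 0 < s * (j : ℝ) + γ - 2 := by linarith
    -- middle factor ≤ 1
    have hmid : ((s * j - 4) / (s * j + γ - 2)) ^ ((s * j - 4) / (γ + 2)) ≤ 1 :=
      Real.rpow_le_one (div_nonneg (by linarith) hden.le)
        ((div_le_one hden).mpr (by linarith)) (div_nonneg (by linarith) hγ2.le)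
    have hmid0 : 0 ≤ ((s * j - 4) / (s * j + γ - 2)) ^ ((s * j - 4) / (γ + 2)) :=
      Real.rpow_nonneg (div_nonneg (by linarith) hden.le) _
    -- first factor ≤ (s j)^2
    have hfirst : (s * j) ^ (2 - 4 / (γ + 2)) / (s * j - 4) ≤ (s * j) ^ ((2 : ℕ) : ℝ) := by
      refine (div_le_self (Real.rpow_nonneg hl0.le _) hl4).trans ?_
      refine Real.rpow_le_rpow_of_exponent_le hl1 ?_
      have h4 : 0 ≤ 4 / (γ + 2) := by positivity
      push_cast; linarith
    have hfirst0 : 0 ≤ (s * j) ^ (2 - 4 / (γ + 2)) / (s * j - 4) :=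
      div_nonneg (Real.rpow_nonneg hl0.le _) (by linarith)
    have hsq : (s * j) ^ ((2 : ℕ) : ℝ) ≤ s ^ 2 * 2 ^ j := by
      rw [Real.rpow_natCast]
      have h2 : ((j : ℝ)) ^ 2 ≤ 2 ^ j := by exact_mod_cast sq_le_two_pow hj4
      calc (s * (j : ℝ)) ^ 2 = s ^ 2 * (j : ℝ) ^ 2 := by ring
        _ ≤ s ^ 2 * 2 ^ j := by
            exact mul_le_mul_of_nonneg_left h2 (by positivity)
    -- last factor
    have hthird : (s * j) ^ (s * (j : ℝ) / (γ + 2)) = (s ^ θ) ^ j * (((j : ℝ)) ^ j) ^ θ := by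
      have he : s * (j : ℝ) / (γ + 2) = θ * (j : ℝ) := by rw [hθdef]; ring
      rw [he, Real.mul_rpow hs0.le j.cast_nonneg, Real.rpow_mul hs0.le,
        Real.rpow_natCast, mul_comm θ ((j : ℝ)), Real.rpow_mul j.cast_nonneg,
        Real.rpow_natCast]
    have hthird_le : (((j : ℝ)) ^ j) ^ θ ≤ (j.factorial : ℝ) ^ θ * (Real.exp θ) ^ j := by
      have h1 : (((j : ℝ)) ^ j) ^ θ ≤ ((j.factorial : ℝ) * Real.exp j) ^ θ :=
        Real.rpow_le_rpow (by positivity) (pow_self_le_factorial_mul_exp j) hθ0.le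
      refine h1.trans_eq ?_
      rw [Real.mul_rpow hfac.le (Real.exp_pos _).le]
      congr 1
      rw [← Real.exp_mul, mul_comm, Real.exp_mul, Real.rpow_natCast]
    have hthird0 : 0 ≤ (s * j) ^ (s * (j : ℝ) / (γ + 2)) := Real.rpow_nonneg hl0.le _
    -- combine into a bound on momentConst
    have hmc : momentConst γ (s * j)
        ≤ (s ^ 2 * 2 ^ j) * ((s ^ θ) ^ j * ((j.factorial : ℝ) ^ θ * (Real.exp θ) ^ j)) := by
      unfold momentConst
      have step1 : (s * ↑j) ^ (2 - 4 / (γ + 2)) / (s * ↑j - 4)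
            * ((s * ↑j - 4) / (s * ↑j + γ - 2)) ^ ((s * ↑j - 4) / (γ + 2))
            * (s * ↑j) ^ (s * ↑j / (γ + 2))
          ≤ (s * ↑j) ^ (2 - 4 / (γ + 2)) / (s * ↑j - 4) * (s * ↑j) ^ (s * ↑j / (γ + 2)) := by
        refine mul_le_mul_of_nonneg_right ?_ hthird0
        exact mul_le_of_le_one_right hfirst0 hmid
      refine step1.trans ?_
      have step2 : (s * ↑j) ^ (2 - 4 / (γ + 2)) / (s * ↑j - 4) * (s * ↑j) ^ (s * ↑j / (γ + 2))
          ≤ (s ^ 2 * 2 ^ j) * (s * ↑j) ^ (s * ↑j / (γ + 2)) :=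
        mul_le_mul_of_nonneg_right (hfirst.trans hsq) hthird0
      refine step2.trans ?_
      rw [hthird]
      refine mul_le_mul_of_nonneg_left ?_ (by positivity)
      exact mul_le_mul_of_nonneg_left hthird_le (by positivity)
    calc κ ^ j / (j.factorial : ℝ) * momentConst γ (s * j)
        ≤ κ ^ j / (j.factorial : ℝ)
            * ((s ^ 2 * 2 ^ j) * ((s ^ θ) ^ j * ((j.factorial : ℝ) ^ θ * (Real.exp θ) ^ j))) :=
          mul_le_mul_of_nonneg_left hmc (by positivity)
      _ = s ^ 2 * (D ^ j * (j.factorial : ℝ) ^ (θ - 1)) := by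
          rw [Real.rpow_sub hfac, Real.rpow_one, hDdef]
          field_simp
          ring
  -- choose the shift N
  set N : ℕ := max 4 ⌈(5 : ℝ) / s⌉₊ with hNdef
  have hN4 : 4 ≤ N := le_max_left _ _
  have hN5 : ∀ j : ℕ, 5 ≤ s * ((j + N : ℕ) : ℝ) := by
    intro j
    have h1 : (5 : ℝ) / s ≤ ((j + N : ℕ) : ℝ) := by
      refine (Nat.le_ceil _).trans ?_
      exact_mod_cast (le_max_right 4 _).trans (Nat.le_add_left N j)
    have := (div_le_iff₀ hs0).mp h1
    linarith [this]
  rw [← summable_nat_add_iff N]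
  have hg : Summable (fun j : ℕ => s ^ 2 * (D ^ (j + N) * ((j + N).factorial : ℝ) ^ (θ - 1))) :=
    (summable_nat_add_iff N).mpr ((aux_summable hD hθ1).mul_left (s ^ 2))
  refine Summable.of_nonneg_of_le (fun j => ?_) (fun j => ?_) hg
  · split
    · rename_i h
      refine mul_nonneg (by positivity) ?_
      have hden : 0 < s * ((j + N : ℕ) : ℝ) + γ - 2 := by linarith
      unfold momentConst
      refine mul_nonneg (mul_nonneg ?_ ?_) (Real.rpow_nonneg (by linarith) _)
      · exact div_nonneg (Real.rpow_nonneg (by linarith) _) (by linarith)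
      · exact Real.rpow_nonneg (div_nonneg (by linarith) hden.le) _
    · exact le_rfl
  · have h5 := hN5 j
    rw [if_pos (by linarith : (4 : ℝ) < s * ((j + N : ℕ) : ℝ))]
    exact key (j + N) h5 ((le_max_left 4 _).trans (Nat.le_add_left N j))
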